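/- arXiv:1612.07366 — 3 statements merged into one kernel-verified Lean document; each statement's English description precedes it below -/
import Mathlib

section
/- Let M₁ be the minor of K_{N,N} (N ≥ 2) obtained by contracting two non-adjacent edges, and M₂ the graph obtained by contracting two adjacent edges. Then M₂ is isomorphic to a subgraph of M₁ (both have 2N−2 vertices, and M₁ has strictly more edges when N ≥ 3). -/
/-- The graph obtained from `G` by identifying vertices according to the setoid `s`:
two classes are adjacent iff they are distinct and joined by an edge of `G`
(parallel edges merged, loops removed). -/
def SimpleGraph.contractS {V : Type*} (G : SimpleGraph V) (s : Setoid V) :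
    SimpleGraph (Quotient s) where
  Adj x y := x ≠ y ∧ ∃ u v, G.Adj u v ∧ Quotient.mk s u = x ∧ Quotient.mk s v = y
  symm := ⟨by rintro x y ⟨hne, u, v, h, hu, hv⟩; exact ⟨hne.symm, v, u, h.symm, hv, hu⟩⟩
  loopless := ⟨by rintro x ⟨hne, -⟩; exact hne rfl⟩

open Sum Relation

section CVNAux

private lemma cvn_eqvGen_le {α : Type*} {r R : α → α → Prop} (hR : Equivalence R)
    (h : ∀ a b, r a b → R a b) : ∀ a b, Relation.EqvGen r a b → R a b := by
  intro a b h'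
  induction h' with
  | rel a b hab => exact h a b hab
  | refl a => exact hR.refl a
  | symm a b _ ih => exact hR.symm ih
  | trans a b c _ _ ih1 ih2 => exact hR.trans ih1 ih2

variable {N : ℕ}

/-- generator for contracting two non-adjacent edges -/
private abbrev cvnGen1 (x1 y1 x2 y2 : Fin N) : (Fin N ⊕ Fin N) → (Fin N ⊕ Fin N) → Prop :=
  fun p q => (p = Sum.inl x1 ∧ q = Sum.inr y1) ∨ (p = Sum.inl x2 ∧ q = Sum.inr y2)

private abbrev cvnR1 (x1 y1 x2 y2 : Fin N) : (Fin N ⊕ Fin N) → (Fin N ⊕ Fin N) → Prop :=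
  fun p q => p = q ∨ (p = inl x1 ∧ q = inr y1) ∨ (p = inr y1 ∧ q = inl x1)
    ∨ (p = inl x2 ∧ q = inr y2) ∨ (p = inr y2 ∧ q = inl x2)

variable {x1 y1 x2 y2 u1 w1 u2 w2 : Fin N}

private lemma cvnR1_equiv (hx : x1 ≠ x2) (hy : y1 ≠ y2) :
    Equivalence (cvnR1 x1 y1 x2 y2) where
  refl _ := Or.inl rfl
  symm h := by rcases h with h | h | h | h | h <;> simp_all [cvnR1] <;> tauto
  trans h1 h2 := by
    rcases h1 with h1 | h1 | h1 | h1 | h1 <;> rcases h2 with h2 | h2 | h2 | h2 | h2 <;>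
      simp_all [cvnR1] <;> tauto

private lemma cvn_eqvGen1_iff (hx : x1 ≠ x2) (hy : y1 ≠ y2) (p q : Fin N ⊕ Fin N) :
    Relation.EqvGen (cvnGen1 x1 y1 x2 y2) p q ↔ cvnR1 x1 y1 x2 y2 p q := by
  constructor
  · exact cvn_eqvGen_le (cvnR1_equiv hx hy) (fun a b h => by
      rcases h with ⟨h1, h2⟩ | ⟨h1, h2⟩ <;> subst h1 <;> subst h2 <;> tauto) p q
  · rintro (rfl | ⟨rfl, rfl⟩ | ⟨rfl, rfl⟩ | ⟨rfl, rfl⟩ | ⟨rfl, rfl⟩)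
    · exact EqvGen.refl p
    · exact EqvGen.rel _ _ (Or.inl ⟨rfl, rfl⟩)
    · exact EqvGen.symm _ _ (EqvGen.rel _ _ (Or.inl ⟨rfl, rfl⟩))
    · exact EqvGen.rel _ _ (Or.inr ⟨rfl, rfl⟩)
    · exact EqvGen.symm _ _ (EqvGen.rel _ _ (Or.inr ⟨rfl, rfl⟩))

/-- generator for contracting two adjacent edges -/
private abbrev cvnGen2 (u1 w1 u2 w2 : Fin N) : (Fin N ⊕ Fin N) → (Fin N ⊕ Fin N) → Prop :=
  fun p q => (p = Sum.inl u1 ∧ q = Sum.inr w1) ∨ (p = Sum.inl u2 ∧ q = Sum.inr w2)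

private abbrev cvnS (u1 w1 u2 w2 : Fin N) : (Fin N ⊕ Fin N) → Prop := fun p =>
  p = inl u1 ∨ p = inl u2 ∨ p = inr w1 ∨ p = inr w2

private abbrev cvnR2 (u1 w1 u2 w2 : Fin N) : (Fin N ⊕ Fin N) → (Fin N ⊕ Fin N) → Prop :=
  fun p q => p = q ∨ (cvnS u1 w1 u2 w2 p ∧ cvnS u1 w1 u2 w2 q)

private lemma cvnR2_equiv : Equivalence (cvnR2 u1 w1 u2 w2) where
  refl _ := Or.inl rfl
  symm h := by rcases h with rfl | ⟨a, b⟩; exacts [Or.inl rfl, Or.inr ⟨b, a⟩]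
  trans h1 h2 := by
    rcases h1 with rfl | ⟨a, b⟩
    · exact h2
    · rcases h2 with rfl | ⟨c, d⟩; exacts [Or.inr ⟨a, b⟩, Or.inr ⟨a, d⟩]

private lemma cvn_chainS (hshare : (u1 = u2 ∧ w1 ≠ w2) ∨ (u1 ≠ u2 ∧ w1 = w2)) :
    ∀ p, cvnS u1 w1 u2 w2 p → Relation.EqvGen (cvnGen2 u1 w1 u2 w2) (inl u1) p := by
  have e1 : Relation.EqvGen (cvnGen2 u1 w1 u2 w2) (inl u1) (inr w1) :=
    EqvGen.rel _ _ (Or.inl ⟨rfl, rfl⟩)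
  have e2 : Relation.EqvGen (cvnGen2 u1 w1 u2 w2) (inl u2) (inr w2) :=
    EqvGen.rel _ _ (Or.inr ⟨rfl, rfl⟩)
  have e3 : Relation.EqvGen (cvnGen2 u1 w1 u2 w2) (inl u1) (inl u2) := by
    rcases hshare with ⟨h, -⟩ | ⟨-, h⟩
    · rw [h]; exact EqvGen.refl _
    · subst h; exact e1.trans _ _ _ (e2.symm _ _)
  rintro p (rfl | rfl | rfl | rfl)
  · exact EqvGen.refl _
  · exact e3
  · exact e1
  · exact e3.trans _ _ _ e2

private lemma cvn_eqvGen2_iff (hshare : (u1 = u2 ∧ w1 ≠ w2) ∨ (u1 ≠ u2 ∧ w1 = w2))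
    (p q : Fin N ⊕ Fin N) :
    Relation.EqvGen (cvnGen2 u1 w1 u2 w2) p q ↔ cvnR2 u1 w1 u2 w2 p q := by
  constructor
  · exact cvn_eqvGen_le cvnR2_equiv (fun a b h => by
      rcases h with ⟨rfl, rfl⟩ | ⟨rfl, rfl⟩ <;> exact Or.inr (by tauto)) p q
  · rintro (rfl | ⟨h1, h2⟩)
    · exact EqvGen.refl p
    · exact ((cvn_chainS hshare p h1).symm _ _).trans _ _ _ (cvn_chainS hshare q h2)

end CVNAux

set_option maxHeartbeats 4000000 in
/-- Let `M₁` be obtained from `K_{N,N}` (`N ≥ 2`) by contracting the two non-adjacent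
edges `(x₁,y₁), (x₂,y₂)` and `M₂` by contracting the two adjacent edges
`(u₁,w₁), (u₂,w₂)` (sharing exactly one endpoint). Then `M₂` is isomorphic to a
subgraph of `M₁`, both have `2N - 2` vertices, and `M₁` has strictly more edges
when `N ≥ 3`. -/
theorem contract_adjacent_vs_nonadjacent (N : ℕ) (hN : 2 ≤ N)
    (x1 y1 x2 y2 : Fin N) (hx : x1 ≠ x2) (hy : y1 ≠ y2)
    (u1 w1 u2 w2 : Fin N)
    (hshare : (u1 = u2 ∧ w1 ≠ w2) ∨ (u1 ≠ u2 ∧ w1 = w2)) :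
    let G := completeBipartiteGraph (Fin N) (Fin N)
    let s1 : Setoid (Fin N ⊕ Fin N) := Relation.EqvGen.setoid fun p q =>
      (p = Sum.inl x1 ∧ q = Sum.inr y1) ∨ (p = Sum.inl x2 ∧ q = Sum.inr y2)
    let s2 : Setoid (Fin N ⊕ Fin N) := Relation.EqvGen.setoid fun p q =>
      (p = Sum.inl u1 ∧ q = Sum.inr w1) ∨ (p = Sum.inl u2 ∧ q = Sum.inr w2)
    let M1 := G.contractS s1
    let M2 := G.contractS s2
    (∃ f : Quotient s2 ↪ Quotient s1, ∀ a b, M2.Adj a b → M1.Adj (f a) (f b)) ∧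
      Nat.card (Quotient s2) = 2 * N - 2 ∧
      Nat.card (Quotient s1) = 2 * N - 2 ∧
      (3 ≤ N → M2.edgeSet.ncard < M1.edgeSet.ncard) := by
  intro G s1 s2 M1 M2
  -- characterization of the two quotients
  have hmk1 : ∀ p q : Fin N ⊕ Fin N,
      Quotient.mk s1 p = Quotient.mk s1 q ↔ cvnR1 x1 y1 x2 y2 p q := by
    intro p q
    constructor
    · intro h
      exact (cvn_eqvGen1_iff hx hy p q).1 (Quotient.exact h)
    · intro h
      exact Quotient.sound ((cvn_eqvGen1_iff hx hy p q).2 h)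
  have hmk2 : ∀ p q : Fin N ⊕ Fin N,
      Quotient.mk s2 p = Quotient.mk s2 q ↔ cvnR2 u1 w1 u2 w2 p q := by
    intro p q
    constructor
    · intro h
      exact (cvn_eqvGen2_iff hshare p q).1 (Quotient.exact h)
    · intro h
      exact Quotient.sound ((cvn_eqvGen2_iff hshare p q).2 h)
  -- choose the permutations used to build the subgraph embedding
  obtain ⟨σ, τ, hσx1, hτy1, hC⟩ : ∃ σ τ : Equiv.Perm (Fin N),
      (∀ i, σ i = x1 → (i = u1 ∨ i = u2)) ∧ (∀ j, τ j = y1 → (j = w1 ∨ j = w2)) ∧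
      ((∀ i, σ i = x2 → (i = u1 ∨ i = u2)) ∨ (∀ j, τ j = y2 → (j = w1 ∨ j = w2))) := by
    rcases hshare with ⟨hu, hw⟩ | ⟨hu, hw⟩
    · -- u1 = u2, w1 ≠ w2 : τ sends w1 ↦ y1 and w2 ↦ y2
      have hc : y1 ≠ Equiv.swap w1 y1 w2 := by
        intro h
        have h2 := congrArg (Equiv.swap w1 y1) h
        rw [Equiv.swap_apply_right, Equiv.swap_apply_self] at h2
        exact hw h2
      refine ⟨Equiv.swap u1 x1,
        (Equiv.swap w1 y1).trans (Equiv.swap (Equiv.swap w1 y1 w2) y2), ?_, ?_, Or.inr ?_⟩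
      · intro i h
        exact Or.inl (Equiv.injective _ (h.trans (Equiv.swap_apply_left u1 x1).symm))
      · intro j h
        have h1 : ((Equiv.swap w1 y1).trans (Equiv.swap (Equiv.swap w1 y1 w2) y2)) w1 = y1 := by
          simp only [Equiv.trans_apply, Equiv.swap_apply_left]
          exact Equiv.swap_apply_of_ne_of_ne hc hy
        exact Or.inl (Equiv.injective _ (h.trans h1.symm))
      · intro j h
        have h2 : ((Equiv.swap w1 y1).trans (Equiv.swap (Equiv.swap w1 y1 w2) y2)) w2 = y2 := by
          simp only [Equiv.trans_apply]
          exact Equiv.swap_apply_left _ _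
        exact Or.inr (Equiv.injective _ (h.trans h2.symm))
    · -- u1 ≠ u2, w1 = w2 : σ sends u1 ↦ x1 and u2 ↦ x2
      have hc : x1 ≠ Equiv.swap u1 x1 u2 := by
        intro h
        have h2 := congrArg (Equiv.swap u1 x1) h
        rw [Equiv.swap_apply_right, Equiv.swap_apply_self] at h2
        exact hu h2
      refine ⟨(Equiv.swap u1 x1).trans (Equiv.swap (Equiv.swap u1 x1 u2) x2),
        Equiv.swap w1 y1, ?_, ?_, Or.inl ?_⟩
      · intro i h
        have h1 : ((Equiv.swap u1 x1).trans (Equiv.swap (Equiv.swap u1 x1 u2) x2)) u1 = x1 := by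
          simp only [Equiv.trans_apply, Equiv.swap_apply_left]
          exact Equiv.swap_apply_of_ne_of_ne hc hx
        exact Or.inl (Equiv.injective _ (h.trans h1.symm))
      · intro j h
        exact Or.inl (Equiv.injective _ (h.trans (Equiv.swap_apply_left w1 y1).symm))
      · intro i h
        have h2 : ((Equiv.swap u1 x1).trans (Equiv.swap (Equiv.swap u1 x1 u2) x2)) u2 = x2 := by
          simp only [Equiv.trans_apply]
          exact Equiv.swap_apply_left _ _
        exact Or.inr (Equiv.injective _ (h.trans h2.symm))
  classical
  -- the vertex map
  obtain ⟨gl, hglS, hglN⟩ : ∃ gl : Fin N → Fin N,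
      (∀ i, (i = u1 ∨ i = u2) → gl i = x1) ∧ (∀ i, i ≠ u1 → i ≠ u2 → gl i = σ i) :=
    ⟨fun i => if i = u1 ∨ i = u2 then x1 else σ i, fun i h => if_pos h,
      fun i h1 h2 => if_neg (by tauto)⟩
  obtain ⟨gr, hgrS, hgrN⟩ : ∃ gr : Fin N → Fin N,
      (∀ j, (j = w1 ∨ j = w2) → gr j = y1) ∧ (∀ j, j ≠ w1 → j ≠ w2 → gr j = τ j) :=
    ⟨fun j => if j = w1 ∨ j = w2 then y1 else τ j, fun j h => if_pos h,
      fun j h1 h2 => if_neg (by tauto)⟩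
  have hgl_x1 : ∀ i, gl i = x1 → (i = u1 ∨ i = u2) := by
    intro i h
    by_cases hi : i = u1 ∨ i = u2
    · exact hi
    · push_neg at hi
      rw [hglN i hi.1 hi.2] at h
      exact hσx1 i h
  have hgr_y1 : ∀ j, gr j = y1 → (j = w1 ∨ j = w2) := by
    intro j h
    by_cases hj : j = w1 ∨ j = w2
    · exact hj
    · push_neg at hj
      rw [hgrN j hj.1 hj.2] at h
      exact hτy1 j h
  have hCgl : (∀ i, gl i ≠ x2) ∨ (∀ j, gr j ≠ y2) := by
    rcases hC with hCl | hCr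
    · left
      intro i h
      by_cases hi : i = u1 ∨ i = u2
      · exact hx (((hglS i hi).symm.trans h))
      · push_neg at hi
        rw [hglN i hi.1 hi.2] at h
        rcases hCl i h with h' | h' <;> [exact hi.1 h'; exact hi.2 h']
    · right
      intro j h
      by_cases hj : j = w1 ∨ j = w2
      · exact hy (((hgrS j hj).symm.trans h))
      · push_neg at hj
        rw [hgrN j hj.1 hj.2] at h
        rcases hCr j h with h' | h' <;> [exact hj.1 h'; exact hj.2 h']
  -- well-definedness of the induced map on the quotient
  have wd : ∀ p q : Fin N ⊕ Fin N, Relation.EqvGen (cvnGen2 u1 w1 u2 w2) p q →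
      Quotient.mk s1 (Sum.map gl gr p) = Quotient.mk s1 (Sum.map gl gr q) := by
    refine cvn_eqvGen_le ⟨fun a => rfl, fun h => h.symm, fun h1 h2 => h1.trans h2⟩ ?_
    rintro a b (⟨rfl, rfl⟩ | ⟨rfl, rfl⟩)
    · rw [Sum.map_inl, Sum.map_inr, hglS u1 (Or.inl rfl), hgrS w1 (Or.inl rfl)]
      exact (hmk1 _ _).2 (Or.inr (Or.inl ⟨rfl, rfl⟩))
    · rw [Sum.map_inl, Sum.map_inr, hglS u2 (Or.inr rfl), hgrS w2 (Or.inr rfl)]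
      exact (hmk1 _ _).2 (Or.inr (Or.inl ⟨rfl, rfl⟩))
  set f : Quotient s2 → Quotient s1 :=
    Quotient.lift (fun p => Quotient.mk s1 (Sum.map gl gr p)) (fun p q h => wd p q h) with hfdef
  have hfmk : ∀ p, f (Quotient.mk s2 p) = Quotient.mk s1 (Sum.map gl gr p) := fun _ => rfl
  -- injectivity
  have hfinj : Function.Injective f := by
    intro a b h
    obtain ⟨p, rfl⟩ := Quotient.exists_rep a
    obtain ⟨q, rfl⟩ := Quotient.exists_rep b
    rw [hfmk, hfmk, hmk1] at h
    rw [hmk2]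
    rcases p with i | j <;> rcases q with i' | j' <;>
      simp only [Sum.map_inl, Sum.map_inr] at h
    · -- inl / inl
      rcases h with h | ⟨h1, h2⟩ | ⟨h1, h2⟩ | ⟨h1, h2⟩ | ⟨h1, h2⟩ <;>
        first
        | (exfalso; exact Sum.inl_ne_inr ‹Sum.inl _ = Sum.inr _›)
        | skip
      rw [Sum.inl.injEq] at h
      by_cases hi : i = u1 ∨ i = u2
      · have hgi : gl i = x1 := hglS i hi
        have hi' : i' = u1 ∨ i' = u2 := hgl_x1 i' (by rw [← h, hgi])
        exact Or.inr ⟨by tauto, by tauto⟩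
      · push_neg at hi
        by_cases hi' : i' = u1 ∨ i' = u2
        · exact absurd (hgl_x1 i (by rw [h, hglS i' hi'])) (by tauto)
        · push_neg at hi'
          rw [hglN i hi.1 hi.2, hglN i' hi'.1 hi'.2] at h
          rw [Equiv.injective σ h]
          exact Or.inl rfl
    · -- inl / inr
      rcases h with h | ⟨h1, h2⟩ | ⟨h1, h2⟩ | ⟨h1, h2⟩ | ⟨h1, h2⟩
      · exact absurd h Sum.inl_ne_inr
      · rw [Sum.inl.injEq] at h1
        rw [Sum.inr.injEq] at h2
        exact Or.inr ⟨by rcases hgl_x1 i h1 with h' | h' <;> tauto,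
          by rcases hgr_y1 j' h2 with h' | h' <;> tauto⟩
      · exact absurd h1 Sum.inl_ne_inr
      · rw [Sum.inl.injEq] at h1
        rw [Sum.inr.injEq] at h2
        exfalso
        rcases hCgl with hh | hh
        · exact hh i h1
        · exact hh j' h2
      · exact absurd h2.symm Sum.inl_ne_inr
    · -- inr / inl
      rcases h with h | ⟨h1, h2⟩ | ⟨h1, h2⟩ | ⟨h1, h2⟩ | ⟨h1, h2⟩
      · exact absurd h.symm Sum.inl_ne_inr
      · exact absurd h1.symm Sum.inl_ne_inr
      · rw [Sum.inr.injEq] at h1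
        rw [Sum.inl.injEq] at h2
        exact Or.inr ⟨by rcases hgr_y1 j h1 with h' | h' <;> tauto,
          by rcases hgl_x1 i' h2 with h' | h' <;> tauto⟩
      · exact absurd h1.symm Sum.inl_ne_inr
      · rw [Sum.inr.injEq] at h1
        rw [Sum.inl.injEq] at h2
        exfalso
        rcases hCgl with hh | hh
        · exact hh i' h2
        · exact hh j h1
    · -- inr / inr
      rcases h with h | ⟨h1, h2⟩ | ⟨h1, h2⟩ | ⟨h1, h2⟩ | ⟨h1, h2⟩ <;>
        first
        | (exfalso; exact Sum.inl_ne_inr ‹Sum.inl _ = Sum.inr _›)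
        | (exfalso; exact Sum.inl_ne_inr (Eq.symm ‹Sum.inr _ = Sum.inl _›))
        | skip
      rw [Sum.inr.injEq] at h
      by_cases hj : j = w1 ∨ j = w2
      · have hgj : gr j = y1 := hgrS j hj
        have hj' : j' = w1 ∨ j' = w2 := hgr_y1 j' (by rw [← h, hgj])
        exact Or.inr ⟨by tauto, by tauto⟩
      · push_neg at hj
        by_cases hj' : j' = w1 ∨ j' = w2
        · exact absurd (hgr_y1 j (by rw [h, hgrS j' hj'])) (by tauto)
        · push_neg at hj'
          rw [hgrN j hj.1 hj.2, hgrN j' hj'.1 hj'.2] at h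
          rw [Equiv.injective τ h]
          exact Or.inl rfl
  -- adjacency in the complete bipartite graph
  have hGadj : ∀ p q : Fin N ⊕ Fin N,
      G.Adj p q ↔ ((p.isLeft ∧ q.isRight) ∨ (p.isRight ∧ q.isLeft)) := fun _ _ => Iff.rfl
  have hgadj : ∀ p q, G.Adj p q → G.Adj (Sum.map gl gr p) (Sum.map gl gr q) := by
    intro p q h
    rw [hGadj] at h ⊢
    rcases p with i | j <;> rcases q with i' | j' <;> simp_all
  -- the embedding preserves adjacency
  have hfadj : ∀ a b, M2.Adj a b → M1.Adj (f a) (f b) := by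
    intro a b hab
    obtain ⟨hne, p, q, hpq, hp, hq⟩ := hab
    refine ⟨fun h => hne (hfinj h), Sum.map gl gr p, Sum.map gl gr q, hgadj p q hpq, ?_, ?_⟩
    · rw [← hp, hfmk]
    · rw [← hq, hfmk]
  refine ⟨⟨⟨f, hfinj⟩, hfadj⟩, ?_, ?_, ?_⟩
  · -- cardinality of Quotient s2
    have hScard : ({inl u1, inl u2, inr w1, inr w2} : Finset (Fin N ⊕ Fin N)).card = 3 := by
      rcases hshare with ⟨h, hw⟩ | ⟨hu, h⟩
      · subst h
        rw [Finset.insert_idem, Finset.card_insert_of_notMem (by simp),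
          Finset.card_insert_of_notMem (by simp [hw]), Finset.card_singleton]
      · subst h
        rw [Finset.insert_eq_self.2 (Finset.mem_singleton_self _),
          Finset.card_insert_of_notMem (by simp [hu]),
          Finset.card_insert_of_notMem (by simp), Finset.card_singleton]
    have hmemS : ∀ p : Fin N ⊕ Fin N,
        p ∈ ({inl u1, inl u2, inr w1, inr w2} : Finset (Fin N ⊕ Fin N)) ↔
          cvnS u1 w1 u2 w2 p := by
      intro p
      simp only [Finset.mem_insert, Finset.mem_singleton, cvnS]
    have hFbij : Function.Bijective
        (fun o : Option {p : Fin N ⊕ Fin N //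
            p ∉ ({inl u1, inl u2, inr w1, inr w2} : Finset (Fin N ⊕ Fin N))} =>
          match o with
          | none => Quotient.mk s2 (inl u1)
          | some p => Quotient.mk s2 p.1) := by
      constructor
      · rintro (_ | ⟨p, hp⟩) (_ | ⟨q, hq⟩) h
        · rfl
        · replace h : Quotient.mk s2 (inl u1) = Quotient.mk s2 q := h
          rw [hmk2] at h
          rcases h with h | ⟨h1, h2⟩
          · exact absurd ((hmemS q).2 (Or.inl h.symm)) hq
          · exact absurd ((hmemS q).2 h2) hq
        · replace h : Quotient.mk s2 p = Quotient.mk s2 (inl u1) := h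
          rw [hmk2] at h
          rcases h with h | ⟨h1, h2⟩
          · exact absurd ((hmemS p).2 (Or.inl h)) hp
          · exact absurd ((hmemS p).2 h1) hp
        · replace h : Quotient.mk s2 p = Quotient.mk s2 q := h
          rw [hmk2] at h
          rcases h with h | ⟨h1, h2⟩
          · subst h
            rfl
          · exact absurd ((hmemS p).2 h1) hp
      · intro a
        obtain ⟨p, rfl⟩ := Quotient.exists_rep a
        by_cases hp : p ∈ ({inl u1, inl u2, inr w1, inr w2} : Finset (Fin N ⊕ Fin N))
        · exact ⟨none, (hmk2 _ _).2 (Or.inr ⟨Or.inl rfl, (hmemS p).1 hp⟩)⟩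
        · exact ⟨some ⟨p, hp⟩, rfl⟩
    rw [← Nat.card_eq_of_bijective _ hFbij, Nat.card_eq_fintype_card, Fintype.card_option,
      Fintype.card_subtype_compl, Fintype.card_coe, hScard, Fintype.card_sum, Fintype.card_fin]
    omega
  · -- cardinality of Quotient s1
    have hTcard : ({inl x1, inl x2, inr y1, inr y2} : Finset (Fin N ⊕ Fin N)).card = 4 := by
      rw [Finset.card_insert_of_notMem (by simp [hx]),
        Finset.card_insert_of_notMem (by simp),
        Finset.card_insert_of_notMem (by simp [hy]), Finset.card_singleton]
    have hmemT : ∀ p : Fin N ⊕ Fin N,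
        p ∈ ({inl x1, inl x2, inr y1, inr y2} : Finset (Fin N ⊕ Fin N)) ↔
          (p = inl x1 ∨ p = inl x2 ∨ p = inr y1 ∨ p = inr y2) := by
      intro p
      simp
    have hcl : ∀ p : Fin N ⊕ Fin N,
        p ∉ ({inl x1, inl x2, inr y1, inr y2} : Finset (Fin N ⊕ Fin N)) →
        ∀ q, Quotient.mk s1 p = Quotient.mk s1 q → p = q := by
      intro p hp q h
      rw [hmk1] at h
      rcases h with h | ⟨h1, h2⟩ | ⟨h1, h2⟩ | ⟨h1, h2⟩ | ⟨h1, h2⟩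
      · exact h
      all_goals exact absurd ((hmemT p).2 (by tauto)) hp
    have hcr : ∀ p q : Fin N ⊕ Fin N,
        q ∉ ({inl x1, inl x2, inr y1, inr y2} : Finset (Fin N ⊕ Fin N)) →
        Quotient.mk s1 p = Quotient.mk s1 q → p = q :=
      fun p q hq h => (hcl q hq p h.symm).symm
    have h12 : Quotient.mk s1 (inl x1) ≠ Quotient.mk s1 (inl x2) := by
      intro h
      rw [hmk1] at h
      rcases h with h | ⟨h1, h2⟩ | ⟨h1, h2⟩ | ⟨h1, h2⟩ | ⟨h1, h2⟩
      · exact hx (Sum.inl_injective h)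
      · exact Sum.inl_ne_inr h2
      · exact Sum.inl_ne_inr h1
      · exact hx (Sum.inl_injective h1)
      · exact Sum.inl_ne_inr h1
    have hFbij : Function.Bijective
        (fun o : Option (Option {p : Fin N ⊕ Fin N //
            p ∉ ({inl x1, inl x2, inr y1, inr y2} : Finset (Fin N ⊕ Fin N))}) =>
          match o with
          | none => Quotient.mk s1 (inl x1)
          | some none => Quotient.mk s1 (inl x2)
          | some (some p) => Quotient.mk s1 p.1) := by
      constructor
      · rintro (_ | (_ | ⟨p, hp⟩)) (_ | (_ | ⟨q, hq⟩)) h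
        · rfl
        · exact absurd h h12
        · exact absurd ((hmemT q).2 (Or.inl (hcr _ q hq h).symm)) hq
        · exact absurd h.symm h12
        · rfl
        · exact absurd ((hmemT q).2 (Or.inr (Or.inl (hcr _ q hq h).symm))) hq
        · exact absurd ((hmemT p).2 (Or.inl (hcl p hp _ h))) hp
        · exact absurd ((hmemT p).2 (Or.inr (Or.inl (hcl p hp _ h)))) hp
        · replace h : Quotient.mk s1 p = Quotient.mk s1 q := h
          have := hcl p hp q h
          subst this
          rfl
      · intro a
        obtain ⟨p, rfl⟩ := Quotient.exists_rep a
        by_cases h1 : p = inl x1 ∨ p = inr y1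
        · refine ⟨none, (hmk1 _ _).2 ?_⟩
          rcases h1 with rfl | rfl
          · exact Or.inl rfl
          · exact Or.inr (Or.inl ⟨rfl, rfl⟩)
        · by_cases h2 : p = inl x2 ∨ p = inr y2
          · refine ⟨some none, (hmk1 _ _).2 ?_⟩
            rcases h2 with rfl | rfl
            · exact Or.inl rfl
            · exact Or.inr (Or.inr (Or.inr (Or.inl ⟨rfl, rfl⟩)))
          · push_neg at h1 h2
            refine ⟨some (some ⟨p, ?_⟩), rfl⟩
            rw [hmemT]
            rintro (h | h | h | h)
            exacts [h1.1 h, h2.1 h, h1.2 h, h2.2 h]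
    rw [← Nat.card_eq_of_bijective _ hFbij, Nat.card_eq_fintype_card, Fintype.card_option,
      Fintype.card_option, Fintype.card_subtype_compl, Fintype.card_coe, hTcard,
      Fintype.card_sum, Fintype.card_fin]
    omega
  · -- edge counts
    intro hN3
    have hex : ∀ a b : Fin N, ∃ z : Fin N, z ≠ a ∧ z ≠ b := by
      intro a b
      by_contra hcon
      push_neg at hcon
      have hsub : (Finset.univ : Finset (Fin N)) ⊆ {a, b} := by
        intro z _
        simp only [Finset.mem_insert, Finset.mem_singleton]
        by_cases hz : z = a
        · exact Or.inl hz
        · exact Or.inr (hcon z hz)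
      have hle := Finset.card_le_card hsub
      have h2 : ({a, b} : Finset (Fin N)).card ≤ 2 := by
        have := Finset.card_insert_le a ({b} : Finset (Fin N))
        simpa using this
      rw [Finset.card_univ, Fintype.card_fin] at hle
      omega
    have hFinj : Function.Injective (Sym2.map f) := Sym2.map.injective hfinj
    have himg : Sym2.map f '' M2.edgeSet ⊆ M1.edgeSet := by
      rintro e ⟨e', he', rfl⟩
      revert he'
      induction e' using Sym2.ind with
      | _ a b =>
        intro he'
        rw [SimpleGraph.mem_edgeSet] at he'
        rw [Sym2.map_pair_eq, SimpleGraph.mem_edgeSet]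
        exact hfadj a b he'
    have hSinl : ∀ c b : Fin N, c ≠ u1 → c ≠ u2 →
        Quotient.mk s2 (inr b) ≠ Quotient.mk s2 (inl c) := by
      intro c b h1 h2 h
      rw [hmk2] at h
      rcases h with h | ⟨hS1, hS2⟩
      · exact Sum.inr_ne_inl h
      · rcases hS2 with h | h | h | h
        · exact h1 (Sum.inl_injective h)
        · exact h2 (Sum.inl_injective h)
        · exact Sum.inl_ne_inr h
        · exact Sum.inl_ne_inr h
    have hSinr : ∀ c b : Fin N, c ≠ w1 → c ≠ w2 →
        Quotient.mk s2 (inl b) ≠ Quotient.mk s2 (inr c) := by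
      intro c b h1 h2 h
      rw [hmk2] at h
      rcases h with h | ⟨hS1, hS2⟩
      · exact Sum.inl_ne_inr h
      · rcases hS2 with h | h | h | h
        · exact Sum.inr_ne_inl h
        · exact Sum.inr_ne_inl h
        · exact h1 (Sum.inr_injective h)
        · exact h2 (Sum.inr_injective h)
    have noadjL : ∀ i i' : Fin N, i ≠ u1 → i ≠ u2 → i' ≠ u1 → i' ≠ u2 →
        ¬ M2.Adj (Quotient.mk s2 (inl i)) (Quotient.mk s2 (inl i')) := by
      intro i i' hi1 hi2 hi1' hi2' hadj
      obtain ⟨hne, p, q, hpq, hp, hq⟩ := hadj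
      rw [hGadj] at hpq
      rcases p with a | a <;> rcases q with b | b <;> simp only [Sum.isLeft, Sum.isRight] at hpq
      · simp at hpq
      · exact hSinl i' b hi1' hi2' hq
      · exact hSinl i a hi1 hi2 hp
      · simp at hpq
    have noadjR : ∀ j j' : Fin N, j ≠ w1 → j ≠ w2 → j' ≠ w1 → j' ≠ w2 →
        ¬ M2.Adj (Quotient.mk s2 (inr j)) (Quotient.mk s2 (inr j')) := by
      intro j j' hj1 hj2 hj1' hj2' hadj
      obtain ⟨hne, p, q, hpq, hp, hq⟩ := hadj
      rw [hGadj] at hpq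
      rcases p with a | a <;> rcases q with b | b <;> simp only [Sum.isLeft, Sum.isRight] at hpq
      · simp at hpq
      · exact hSinr j a hj1 hj2 hp
      · exact hSinr j' b hj1' hj2' hq
      · simp at hpq
    have keyL : (∀ j, gr j ≠ y2) → ∀ (c : Quotient s2) (v : Fin N), v ≠ x1 →
        f c = Quotient.mk s1 (inl v) → ∃ i, i ≠ u1 ∧ i ≠ u2 ∧ c = Quotient.mk s2 (inl i) := by
      intro hgr2 c v hv h
      obtain ⟨p, rfl⟩ := Quotient.exists_rep c
      rw [hfmk] at h
      rcases p with i | j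
      · rw [Sum.map_inl, hmk1] at h
        have hgi : gl i = v := by
          rcases h with h | ⟨h1, h2⟩ | ⟨h1, h2⟩ | ⟨h1, h2⟩ | ⟨h1, h2⟩
          · exact Sum.inl_injective h
          · exact absurd h2 Sum.inl_ne_inr
          · exact absurd h1 Sum.inl_ne_inr
          · exact absurd h2 Sum.inl_ne_inr
          · exact absurd h1 Sum.inl_ne_inr
        by_cases hi : i = u1 ∨ i = u2
        · exact absurd ((hglS i hi).symm.trans hgi).symm hv
        · push_neg at hi
          exact ⟨i, hi.1, hi.2, rfl⟩
      · rw [Sum.map_inr, hmk1] at h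
        exfalso
        rcases h with h | ⟨h1, h2⟩ | ⟨h1, h2⟩ | ⟨h1, h2⟩ | ⟨h1, h2⟩
        · exact Sum.inr_ne_inl h
        · exact Sum.inr_ne_inl h1
        · exact hv (Sum.inl_injective h2)
        · exact Sum.inr_ne_inl h1
        · exact hgr2 j (Sum.inr_injective h1)
    have keyR : (∀ i, gl i ≠ x2) → ∀ (c : Quotient s2) (v : Fin N), v ≠ y1 →
        f c = Quotient.mk s1 (inr v) → ∃ j, j ≠ w1 ∧ j ≠ w2 ∧ c = Quotient.mk s2 (inr j) := by
      intro hgl2 c v hv h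
      obtain ⟨p, rfl⟩ := Quotient.exists_rep c
      rw [hfmk] at h
      rcases p with i | j
      · rw [Sum.map_inl, hmk1] at h
        exfalso
        rcases h with h | ⟨h1, h2⟩ | ⟨h1, h2⟩ | ⟨h1, h2⟩ | ⟨h1, h2⟩
        · exact Sum.inl_ne_inr h
        · exact hv (Sum.inr_injective h2)
        · exact Sum.inl_ne_inr h1
        · exact hgl2 i (Sum.inl_injective h1)
        · exact Sum.inl_ne_inr h1
      · rw [Sum.map_inr, hmk1] at h
        have hgj : gr j = v := by
          rcases h with h | ⟨h1, h2⟩ | ⟨h1, h2⟩ | ⟨h1, h2⟩ | ⟨h1, h2⟩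
          · exact Sum.inr_injective h
          · exact absurd h1 Sum.inr_ne_inl
          · exact absurd h2 Sum.inr_ne_inl
          · exact absurd h1 Sum.inr_ne_inl
          · exact absurd h2 Sum.inr_ne_inl
        by_cases hj : j = w1 ∨ j = w2
        · exact absurd ((hgrS j hj).symm.trans hgj).symm hv
        · push_neg at hj
          exact ⟨j, hj.1, hj.2, rfl⟩
    rcases hCgl with hgl2 | hgr2
    · obtain ⟨t, ht1, ht2⟩ := hex y1 y2
      have hεmem : s(Quotient.mk s1 (inr y2), Quotient.mk s1 (inr t)) ∈ M1.edgeSet := by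
        rw [SimpleGraph.mem_edgeSet]
        refine ⟨?_, inl x2, inr t, ?_, ?_, rfl⟩
        · intro h
          rw [hmk1] at h
          rcases h with h | ⟨h1, h2⟩ | ⟨h1, h2⟩ | ⟨h1, h2⟩ | ⟨h1, h2⟩
          · exact ht2 (Sum.inr_injective h).symm
          · exact Sum.inr_ne_inl h1
          · exact hy (Sum.inr_injective h1).symm
          · exact Sum.inr_ne_inl h1
          · exact Sum.inr_ne_inl h2
        · rw [hGadj]; simp
        · exact (hmk1 _ _).2 (Or.inr (Or.inr (Or.inr (Or.inl ⟨rfl, rfl⟩))))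
      have hεnot : s(Quotient.mk s1 (inr y2), Quotient.mk s1 (inr t)) ∉
          Sym2.map f '' M2.edgeSet := by
        rintro ⟨e, he, heq⟩
        revert he heq
        induction e using Sym2.ind with
        | _ a b =>
          intro he heq
          rw [SimpleGraph.mem_edgeSet] at he
          rw [Sym2.map_pair_eq, Sym2.eq_iff] at heq
          rcases heq with ⟨h1, h2⟩ | ⟨h1, h2⟩
          · obtain ⟨j, hj1, hj2, rfl⟩ := keyR hgl2 a y2 hy.symm h1
            obtain ⟨j', hj1', hj2', rfl⟩ := keyR hgl2 b t ht1 h2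
            exact noadjR j j' hj1 hj2 hj1' hj2' he
          · obtain ⟨j, hj1, hj2, rfl⟩ := keyR hgl2 a t ht1 h1
            obtain ⟨j', hj1', hj2', rfl⟩ := keyR hgl2 b y2 hy.symm h2
            exact noadjR j j' hj1 hj2 hj1' hj2' he
      calc M2.edgeSet.ncard = (Sym2.map f '' M2.edgeSet).ncard :=
            (Set.ncard_image_of_injective _ hFinj).symm
        _ < M1.edgeSet.ncard :=
            Set.ncard_lt_ncard ((Set.ssubset_iff_of_subset himg).2 ⟨_, hεmem, hεnot⟩)
              (Set.toFinite _)
    · obtain ⟨z, hz1, hz2⟩ := hex x1 x2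
      have hεmem : s(Quotient.mk s1 (inl x2), Quotient.mk s1 (inl z)) ∈ M1.edgeSet := by
        rw [SimpleGraph.mem_edgeSet]
        refine ⟨?_, inr y2, inl z, ?_, ?_, rfl⟩
        · intro h
          rw [hmk1] at h
          rcases h with h | ⟨h1, h2⟩ | ⟨h1, h2⟩ | ⟨h1, h2⟩ | ⟨h1, h2⟩
          · exact hz2 (Sum.inl_injective h).symm
          · exact hx (Sum.inl_injective h1).symm
          · exact Sum.inl_ne_inr h1
          · exact Sum.inl_ne_inr h2
          · exact Sum.inl_ne_inr h1
        · rw [hGadj]; simp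
        · exact (hmk1 _ _).2 (Or.inr (Or.inr (Or.inr (Or.inr ⟨rfl, rfl⟩))))
      have hεnot : s(Quotient.mk s1 (inl x2), Quotient.mk s1 (inl z)) ∉
          Sym2.map f '' M2.edgeSet := by
        rintro ⟨e, he, heq⟩
        revert he heq
        induction e using Sym2.ind with
        | _ a b =>
          intro he heq
          rw [SimpleGraph.mem_edgeSet] at he
          rw [Sym2.map_pair_eq, Sym2.eq_iff] at heq
          rcases heq with ⟨h1, h2⟩ | ⟨h1, h2⟩
          · obtain ⟨i, hi1, hi2, rfl⟩ := keyL hgr2 a x2 hx.symm h1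
            obtain ⟨i', hi1', hi2', rfl⟩ := keyL hgr2 b z hz1 h2
            exact noadjL i i' hi1 hi2 hi1' hi2' he
          · obtain ⟨i, hi1, hi2, rfl⟩ := keyL hgr2 a z hz1 h1
            obtain ⟨i', hi1', hi2', rfl⟩ := keyL hgr2 b x2 hx.symm h2
            exact noadjL i i' hi1 hi2 hi1' hi2' he
      calc M2.edgeSet.ncard = (Sym2.map f '' M2.edgeSet).ncard :=
            (Set.ncard_image_of_injective _ hFinj).symm
        _ < M1.edgeSet.ncard :=
            Set.ncard_lt_ncard ((Set.ssubset_iff_of_subset himg).2 ⟨_, hεmem, hεnot⟩)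
              (Set.toFinite _)
end

section
/- For the graph M_k obtained from K_{N,N} by contracting a matching of size k (1 ≤ k ≤ N−1), M_k is not isomorphic to any subgraph of M_j for any j < k. -/
lemma eqvgen_iff {α β : Type*} {m : ℕ} {a : Fin m → α} {b : Fin m → β}
    (ha : Function.Injective a) (hb : Function.Injective b) (p q : α ⊕ β) :
    Relation.EqvGen (fun p q => ∃ i, p = Sum.inl (a i) ∧ q = Sum.inr (b i)) p q ↔
      p = q ∨ ∃ i, (p = Sum.inl (a i) ∧ q = Sum.inr (b i)) ∨
        (q = Sum.inl (a i) ∧ p = Sum.inr (b i)) := by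
  constructor
  · intro h
    induction h with
    | rel x y h => exact Or.inr ⟨h.choose, Or.inl h.choose_spec⟩
    | refl x => exact Or.inl rfl
    | symm x y _ ih =>
      rcases ih with rfl | ⟨i, h | h⟩
      · exact Or.inl rfl
      · exact Or.inr ⟨i, Or.inr h⟩
      · exact Or.inr ⟨i, Or.inl h⟩
    | trans x y z _ _ ih1 ih2 =>
      rcases ih1 with rfl | ⟨i, ⟨h1, h2⟩ | ⟨h1, h2⟩⟩
      · exact ih2
      · rcases ih2 with rfl | ⟨i', ⟨h3, h4⟩ | ⟨h3, h4⟩⟩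
        · exact Or.inr ⟨i, Or.inl ⟨h1, h2⟩⟩
        · rw [h2] at h3; exact absurd h3 (by simp)
        · rw [h2] at h4
          obtain rfl := hb (Sum.inr.inj h4)
          exact Or.inl (h1.trans h3.symm)
      · rcases ih2 with rfl | ⟨i', ⟨h3, h4⟩ | ⟨h3, h4⟩⟩
        · exact Or.inr ⟨i, Or.inr ⟨h1, h2⟩⟩
        · rw [h1] at h3
          obtain rfl := ha (Sum.inl.inj h3)
          exact Or.inl (h2.trans h4.symm)
        · rw [h1] at h4; exact absurd h4 (by simp)
  · rintro (rfl | ⟨i, ⟨rfl, rfl⟩ | ⟨rfl, rfl⟩⟩)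
    · exact Relation.EqvGen.refl _
    · exact Relation.EqvGen.rel _ _ ⟨i, rfl, rfl⟩
    · exact Relation.EqvGen.symm _ _ (Relation.EqvGen.rel _ _ ⟨i, rfl, rfl⟩)

/-- For `1 ≤ k ≤ N - 1` and `j < k`, the graph `M_k` obtained from `K_{N,N}` by
contracting a matching of size `k` is not isomorphic to any subgraph of the graph `M_j`
obtained by contracting a matching of size `j`. -/
theorem contract_matching_not_subgraph (N k j : ℕ) (hk1 : 1 ≤ k) (hk2 : k ≤ N - 1)
    (hj : j < k)
    (a b : Fin k → Fin N) (ha : Function.Injective a) (hb : Function.Injective b)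
    (a' b' : Fin j → Fin N) (ha' : Function.Injective a') (hb' : Function.Injective b') :
    let G := completeBipartiteGraph (Fin N) (Fin N)
    let sk : Setoid (Fin N ⊕ Fin N) :=
      Relation.EqvGen.setoid fun p q => ∃ i, p = Sum.inl (a i) ∧ q = Sum.inr (b i)
    let sj : Setoid (Fin N ⊕ Fin N) :=
      Relation.EqvGen.setoid fun p q => ∃ i, p = Sum.inl (a' i) ∧ q = Sum.inr (b' i)
    let Mk := G.contractS sk
    let Mj := G.contractS sj
    ¬ ∃ f : Quotient sk ↪ Quotient sj, ∀ u v, Mk.Adj u v → Mj.Adj (f u) (f v) := by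
  intro G sk sj Mk Mj
  rintro ⟨f, hf⟩
  have hsk : ∀ p q : Fin N ⊕ Fin N, (Quotient.mk sk p = Quotient.mk sk q) ↔
      (p = q ∨ ∃ i, (p = Sum.inl (a i) ∧ q = Sum.inr (b i)) ∨
        (q = Sum.inl (a i) ∧ p = Sum.inr (b i))) :=
    fun p q => Quotient.eq.trans (eqvgen_iff ha hb p q)
  have hsj : ∀ p q : Fin N ⊕ Fin N, (Quotient.mk sj p = Quotient.mk sj q) ↔
      (p = q ∨ ∃ i, (p = Sum.inl (a' i) ∧ q = Sum.inr (b' i)) ∨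
        (q = Sum.inl (a' i) ∧ p = Sum.inr (b' i))) :=
    fun p q => Quotient.eq.trans (eqvgen_iff ha' hb' p q)
  have hsurj : ∀ g : Fin k → Fin N, ∃ x : Fin N, ∀ i, g i ≠ x := by
    intro g
    by_contra h
    push_neg at h
    have hs : Function.Surjective g := fun x => (h x).imp (fun i hi => hi)
    have := Fintype.card_le_of_surjective g hs
    simp only [Fintype.card_fin] at this
    omega
  obtain ⟨x₀, hx₀⟩ := hsurj a
  obtain ⟨y₀, hy₀⟩ := hsurj b
  -- the clique in Mk
  set c : Fin k ⊕ Bool → Quotient sk := fun s =>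
    match s with
    | Sum.inl i => Quotient.mk sk (Sum.inl (a i))
    | Sum.inr false => Quotient.mk sk (Sum.inl x₀)
    | Sum.inr true => Quotient.mk sk (Sum.inr y₀) with hc
  have e1 : ∀ i i' : Fin k,
      Quotient.mk sk (Sum.inl (a i)) = Quotient.mk sk (Sum.inl (a i')) → i = i' := by
    intro i i' h
    rw [hsk] at h
    rcases h with h | ⟨i'', ⟨h1, h2⟩ | ⟨h1, h2⟩⟩
    · exact ha (Sum.inl.inj h)
    · exact absurd h2 (by simp)
    · exact absurd h2 (by simp)
  have e2 : ∀ i : Fin k, Quotient.mk sk (Sum.inl (a i)) ≠ Quotient.mk sk (Sum.inl x₀) := by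
    intro i h
    rw [hsk] at h
    rcases h with h | ⟨i'', ⟨h1, h2⟩ | ⟨h1, h2⟩⟩
    · exact hx₀ i (Sum.inl.inj h)
    · exact absurd h2 (by simp)
    · exact hx₀ i'' (Sum.inl.inj h1).symm
  have e3 : ∀ i : Fin k, Quotient.mk sk (Sum.inl (a i)) ≠ Quotient.mk sk (Sum.inr y₀) := by
    intro i h
    rw [hsk] at h
    rcases h with h | ⟨i'', ⟨h1, h2⟩ | ⟨h1, h2⟩⟩
    · exact absurd h (by simp)
    · exact hy₀ i'' (Sum.inr.inj h2).symm
    · exact absurd h1 (by simp)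
  have e4 : Quotient.mk sk (Sum.inl x₀) ≠ Quotient.mk sk (Sum.inr y₀) := by
    intro h
    rw [hsk] at h
    rcases h with h | ⟨i'', ⟨h1, h2⟩ | ⟨h1, h2⟩⟩
    · exact absurd h (by simp)
    · exact hx₀ i'' (Sum.inl.inj h1).symm
    · exact absurd h1 (by simp)
  have hcinj : Function.Injective c := by
    rintro (i | (_|_)) (i' | (_|_)) h
    · exact congrArg Sum.inl (e1 _ _ h)
    · exact absurd h (e2 i)
    · exact absurd h (e3 i)
    · exact absurd h.symm (e2 i')
    · rfl
    · exact absurd h e4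
    · exact absurd h.symm (e3 i')
    · exact absurd h.symm e4
    · rfl
  have hclique : ∀ s t, s ≠ t → Mk.Adj (c s) (c t) := by
    intro s t hst
    refine ⟨fun h => hst (hcinj h), ?_⟩
    match s, t with
    | Sum.inl i, Sum.inl i' =>
      exact ⟨Sum.inl (a i), Sum.inr (b i'), Or.inl ⟨rfl, rfl⟩, rfl,
        (hsk _ _).2 (Or.inr ⟨i', Or.inr ⟨rfl, rfl⟩⟩)⟩
    | Sum.inl i, Sum.inr false =>
      exact ⟨Sum.inr (b i), Sum.inl x₀, Or.inr ⟨rfl, rfl⟩,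
        (hsk _ _).2 (Or.inr ⟨i, Or.inr ⟨rfl, rfl⟩⟩), rfl⟩
    | Sum.inl i, Sum.inr true =>
      exact ⟨Sum.inl (a i), Sum.inr y₀, Or.inl ⟨rfl, rfl⟩, rfl, rfl⟩
    | Sum.inr false, Sum.inl i =>
      exact ⟨Sum.inl x₀, Sum.inr (b i), Or.inl ⟨rfl, rfl⟩, rfl,
        (hsk _ _).2 (Or.inr ⟨i, Or.inr ⟨rfl, rfl⟩⟩)⟩
    | Sum.inr true, Sum.inl i =>
      exact ⟨Sum.inr y₀, Sum.inl (a i), Or.inr ⟨rfl, rfl⟩, rfl, rfl⟩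
    | Sum.inr false, Sum.inr true =>
      exact ⟨Sum.inl x₀, Sum.inr y₀, Or.inl ⟨rfl, rfl⟩, rfl, rfl⟩
    | Sum.inr true, Sum.inr false =>
      exact ⟨Sum.inr y₀, Sum.inl x₀, Or.inr ⟨rfl, rfl⟩, rfl, rfl⟩
    | Sum.inr false, Sum.inr false => exact absurd rfl hst
    | Sum.inr true, Sum.inr true => exact absurd rfl hst
  -- non-adjacency lemmas in Mj
  have hL : ∀ x x' : Fin N, (∀ i, a' i ≠ x) → (∀ i, a' i ≠ x') →
      ¬ Mj.Adj (Quotient.mk sj (Sum.inl x)) (Quotient.mk sj (Sum.inl x')) := by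
    rintro x x' hx hx' ⟨-, u, v, huv, hu, hv⟩
    rw [hsj] at hu hv
    have hu' : u = Sum.inl x := by
      rcases hu with h | ⟨i, ⟨h1, h2⟩ | ⟨h1, h2⟩⟩
      · exact h
      · exact absurd h2 (by simp)
      · exact absurd (Sum.inl.inj h1).symm (hx i)
    have hv' : v = Sum.inl x' := by
      rcases hv with h | ⟨i, ⟨h1, h2⟩ | ⟨h1, h2⟩⟩
      · exact h
      · exact absurd h2 (by simp)
      · exact absurd (Sum.inl.inj h1).symm (hx' i)
    rw [hu', hv'] at huv
    exact absurd (show (completeBipartiteGraph (Fin N) (Fin N)).Adj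
      (Sum.inl x) (Sum.inl x') from huv) (by simp)
  have hR : ∀ y y' : Fin N, (∀ i, b' i ≠ y) → (∀ i, b' i ≠ y') →
      ¬ Mj.Adj (Quotient.mk sj (Sum.inr y)) (Quotient.mk sj (Sum.inr y')) := by
    rintro y y' hy hy' ⟨-, u, v, huv, hu, hv⟩
    rw [hsj] at hu hv
    have hu' : u = Sum.inr y := by
      rcases hu with h | ⟨i, ⟨h1, h2⟩ | ⟨h1, h2⟩⟩
      · exact h
      · exact absurd (Sum.inr.inj h2).symm (hy i)
      · exact absurd h1 (by simp)
    have hv' : v = Sum.inr y' := by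
      rcases hv with h | ⟨i, ⟨h1, h2⟩ | ⟨h1, h2⟩⟩
      · exact h
      · exact absurd (Sum.inr.inj h2).symm (hy' i)
      · exact absurd h1 (by simp)
    rw [hu', hv'] at huv
    exact absurd (show (completeBipartiteGraph (Fin N) (Fin N)).Adj
      (Sum.inr y) (Sum.inr y') from huv) (by simp)
  set q : Fin k ⊕ Bool → Quotient sj := fun s => f (c s) with hq
  have hqinj : Function.Injective q := fun s t h => hcinj (f.injective h)
  have hqadj : ∀ s t, s ≠ t → Mj.Adj (q s) (q t) := fun s t hst => hf _ _ (hclique s t hst)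
  have tri : ∀ s, (∃ i : Fin j, q s = Quotient.mk sj (Sum.inl (a' i))) ∨
      (∃ x : Fin N, (∀ i, a' i ≠ x) ∧ q s = Quotient.mk sj (Sum.inl x)) ∨
      (∃ y : Fin N, (∀ i, b' i ≠ y) ∧ q s = Quotient.mk sj (Sum.inr y)) := by
    intro s
    obtain ⟨p, hp⟩ := Quotient.exists_rep (q s)
    match p with
    | Sum.inl x =>
      by_cases hx : ∃ i, a' i = x
      · obtain ⟨i, rfl⟩ := hx
        exact Or.inl ⟨i, hp.symm⟩
      · push_neg at hx
        exact Or.inr (Or.inl ⟨x, hx, hp.symm⟩)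
    | Sum.inr y =>
      by_cases hy : ∃ i, b' i = y
      · obtain ⟨i, rfl⟩ := hy
        refine Or.inl ⟨i, ?_⟩
        rw [← hp]
        exact (hsj _ _).2 (Or.inr ⟨i, Or.inr ⟨rfl, rfl⟩⟩)
      · push_neg at hy
        exact Or.inr (Or.inr ⟨y, hy, hp.symm⟩)
  classical
  set F : Fin k ⊕ Bool → Fin j ⊕ Bool := fun s =>
    if h : ∃ i : Fin j, q s = Quotient.mk sj (Sum.inl (a' i)) then Sum.inl h.choose
    else if ∃ x : Fin N, (∀ i, a' i ≠ x) ∧ q s = Quotient.mk sj (Sum.inl x) then Sum.inr false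
    else Sum.inr true with hF
  have key : ∀ s, (∀ i, F s = Sum.inl i → q s = Quotient.mk sj (Sum.inl (a' i))) ∧
      (F s = Sum.inr false →
        ∃ x : Fin N, (∀ i, a' i ≠ x) ∧ q s = Quotient.mk sj (Sum.inl x)) ∧
      (F s = Sum.inr true →
        ∃ y : Fin N, (∀ i, b' i ≠ y) ∧ q s = Quotient.mk sj (Sum.inr y)) := by
    intro s
    by_cases hA : ∃ i : Fin j, q s = Quotient.mk sj (Sum.inl (a' i))
    · have hFs : F s = Sum.inl hA.choose := dif_pos hA
      refine ⟨?_, ?_, ?_⟩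
      · intro i hi
        rw [hFs] at hi
        rw [← Sum.inl.inj hi]
        exact hA.choose_spec
      · intro hi; rw [hFs] at hi; exact absurd hi (by simp)
      · intro hi; rw [hFs] at hi; exact absurd hi (by simp)
    · by_cases hB : ∃ x : Fin N, (∀ i, a' i ≠ x) ∧ q s = Quotient.mk sj (Sum.inl x)
      · have hFs : F s = Sum.inr false := (dif_neg hA).trans (if_pos hB)
        refine ⟨?_, fun _ => hB, ?_⟩
        · intro i hi; rw [hFs] at hi; exact absurd hi (by simp)
        · intro hi; rw [hFs] at hi; exact absurd hi (by simp)
      · have hFs : F s = Sum.inr true := (dif_neg hA).trans (if_neg hB)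
        refine ⟨?_, ?_, ?_⟩
        · intro i hi; rw [hFs] at hi; exact absurd hi (by simp)
        · intro hi; rw [hFs] at hi; exact absurd hi (by simp)
        · intro _
          rcases tri s with h' | h' | h'
          · exact absurd h' hA
          · exact absurd h' hB
          · exact h'
  have hFinj : Function.Injective F := by
    intro s t h
    by_contra hst
    have hadj := hqadj s t hst
    rcases hv : F s with i | (_|_)
    · rw [hv] at h
      have h1 := (key s).1 i hv
      have h2 := (key t).1 i h.symm
      exact hst (hqinj (h1.trans h2.symm))
    · rw [hv] at h
      obtain ⟨x, hx, hxe⟩ := (key s).2.1 hv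
      obtain ⟨x', hx', hxe'⟩ := (key t).2.1 h.symm
      rw [hxe, hxe'] at hadj
      exact hL x x' hx hx' hadj
    · rw [hv] at h
      obtain ⟨y, hy, hye⟩ := (key s).2.2 hv
      obtain ⟨y', hy', hye'⟩ := (key t).2.2 h.symm
      rw [hye, hye'] at hadj
      exact hR y y' hy hy' hadj
  have hcard := Fintype.card_le_of_injective F hFinj
  simp only [Fintype.card_sum, Fintype.card_fin, Fintype.card_bool] at hcard
  omega
end

section
/- The largest complete graph minor of the complete bipartite graph K_{N,N'} is K_{min(N,N')+1}. -/
/-- `H` is a minor of `G`: there is a minor model assigning to each vertex of `H`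
a nonempty connected branch set in `G`, pairwise disjoint, with an edge of `G`
between the branch sets of any two adjacent vertices of `H`. -/
def SimpleGraph.IsMinorOf {α β : Type*} (H : SimpleGraph α) (G : SimpleGraph β) : Prop :=
  ∃ f : α → Set β,
    (∀ a, (f a).Nonempty) ∧
    (∀ a, (G.induce (f a)).Connected) ∧
    (Pairwise fun a b => Disjoint (f a) (f b)) ∧
    ∀ a b, H.Adj a b → ∃ u ∈ f a, ∃ v ∈ f b, G.Adj u v

/-- A graph in which any two vertices are equal or adjacent is connected. -/
lemma connected_of_adj_or_eq' {V : Type*} [Nonempty V] (G : SimpleGraph V)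
    (h : ∀ u v : V, u = v ∨ G.Adj u v) : G.Connected := by
  constructor
  intro u v
  rcases h u v with rfl | h
  · rfl
  · exact h.reachable

/-- Branch sets for the `K_{m+1}` minor model in `K_{N,N'}`. -/
def bset (m N N' i : ℕ) : Set (Fin N ⊕ Fin N') :=
  {v | Sum.elim (fun x : Fin N => (i + 1 < m ∧ x.val = i) ∨ (i + 1 = m ∧ x.val = m - 1))
       (fun y : Fin N' => (i + 1 < m ∧ y.val = i) ∨ (i = m ∧ y.val = m - 1)) v}

@[simp] lemma mem_bset_inl {m N N' i : ℕ} {x : Fin N} :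
    Sum.inl x ∈ bset m N N' i ↔ (i + 1 < m ∧ x.val = i) ∨ (i + 1 = m ∧ x.val = m - 1) :=
  Iff.rfl

@[simp] lemma mem_bset_inr {m N N' i : ℕ} {y : Fin N'} :
    Sum.inr y ∈ bset m N N' i ↔ (i + 1 < m ∧ y.val = i) ∨ (i = m ∧ y.val = m - 1) :=
  Iff.rfl

lemma completeBipartite_top_minor (N N' : ℕ) (hN : 1 ≤ N) (hN' : 1 ≤ N') :
    SimpleGraph.IsMinorOf (⊤ : SimpleGraph (Fin (min N N' + 1)))
        (completeBipartiteGraph (Fin N) (Fin N')) := by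
  set m := min N N' with hm
  have hmN : m ≤ N := Nat.min_le_left _ _
  have hmN' : m ≤ N' := Nat.min_le_right _ _
  have hm1 : 1 ≤ m := le_min hN hN'
  clear_value m
  have hne : ∀ a : Fin (m + 1), (bset m N N' a.val).Nonempty := by
    intro a
    have ha := a.isLt
    by_cases h1 : a.val + 1 < m
    · exact ⟨Sum.inl ⟨a.val, by omega⟩, by simp [h1]⟩
    · by_cases h2 : a.val + 1 = m
      · exact ⟨Sum.inl ⟨m - 1, by omega⟩, by simp [h2]⟩
      · exact ⟨Sum.inr ⟨m - 1, by omega⟩, by simp; omega⟩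
  have hL : ∀ a : Fin (m + 1), a.val < m → ∃ x : Fin N, Sum.inl x ∈ bset m N N' a.val := by
    intro a ha
    by_cases h1 : a.val + 1 < m
    · exact ⟨⟨a.val, by omega⟩, by simp [h1]⟩
    · exact ⟨⟨m - 1, by omega⟩, by simp; omega⟩
  have hR : ∀ a : Fin (m + 1), a.val + 1 ≠ m → ∃ y : Fin N', Sum.inr y ∈ bset m N N' a.val := by
    intro a ha
    have h := a.isLt
    by_cases h1 : a.val + 1 < m
    · exact ⟨⟨a.val, by omega⟩, by simp [h1]⟩
    · exact ⟨⟨m - 1, by omega⟩, by simp; omega⟩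
  refine ⟨fun i => bset m N N' i.val, hne, ?_, ?_, ?_⟩
  · intro a
    haveI := (hne a).to_subtype
    apply connected_of_adj_or_eq'
    rintro ⟨u, hu⟩ ⟨v, hv⟩
    cases u with
    | inl x =>
      cases v with
      | inl x' =>
        left
        simp only [mem_bset_inl] at hu hv
        exact Subtype.ext (congrArg Sum.inl (Fin.ext (by omega)))
      | inr y => right; simp
    | inr y =>
      cases v with
      | inl x => right; simp
      | inr y' =>
        left
        simp only [mem_bset_inr] at hu hv
        exact Subtype.ext (congrArg Sum.inr (Fin.ext (by omega)))
  · intro a b hab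
    have hab' : a.val ≠ b.val := fun h => hab (Fin.ext h)
    rw [Set.disjoint_left]
    intro v hv hv'
    cases v with
    | inl x => simp only [mem_bset_inl] at hv hv'; omega
    | inr y => simp only [mem_bset_inr] at hv hv'; omega
  · intro a b hab
    rw [SimpleGraph.top_adj] at hab
    have hab' : a.val ≠ b.val := fun h => hab (Fin.ext h)
    have ha := a.isLt
    have hb := b.isLt
    by_cases hc : a.val < m ∧ b.val + 1 ≠ m
    · obtain ⟨x, hx⟩ := hL a hc.1
      obtain ⟨y, hy⟩ := hR b hc.2
      exact ⟨Sum.inl x, hx, Sum.inr y, hy, by simp⟩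
    · have hc' : a.val + 1 ≠ m ∧ b.val < m := by omega
      obtain ⟨y, hy⟩ := hR a hc'.1
      obtain ⟨x, hx⟩ := hL b hc'.2
      exact ⟨Sum.inr y, hy, Sum.inl x, hx, by simp⟩

lemma completeBipartite_no_bigger_minor (N N' : ℕ) (hN : 1 ≤ N) (hN' : 1 ≤ N') :
    ¬ SimpleGraph.IsMinorOf (⊤ : SimpleGraph (Fin (min N N' + 2)))
        (completeBipartiteGraph (Fin N) (Fin N')) := by
  classical
  rintro ⟨f, hne, _, hdisj, hadj⟩
  let A : Finset (Fin (min N N' + 2)) := Finset.univ.filter fun i => ∃ x, Sum.inl x ∈ f i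
  let B : Finset (Fin (min N N' + 2)) := Finset.univ.filter fun i => ∃ x, Sum.inr x ∈ f i
  have hAc : Aᶜ.card ≤ 1 := by
    rw [Finset.card_le_one]
    intro i hi j hj
    by_contra hij
    obtain ⟨u, hu, v, hv, huv⟩ := hadj i j (by simpa using hij)
    simp only [A, Finset.mem_compl, Finset.mem_filter, Finset.mem_univ, true_and,
      not_exists] at hi hj
    cases u with
    | inl x => exact hi x hu
    | inr x =>
      cases v with
      | inl y => exact hj y hv
      | inr y => simp at huv
  have hBc : Bᶜ.card ≤ 1 := by
    rw [Finset.card_le_one]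
    intro i hi j hj
    by_contra hij
    obtain ⟨u, hu, v, hv, huv⟩ := hadj i j (by simpa using hij)
    simp only [B, Finset.mem_compl, Finset.mem_filter, Finset.mem_univ, true_and,
      not_exists] at hi hj
    cases u with
    | inr x => exact hi x hu
    | inl x =>
      cases v with
      | inr y => exact hj y hv
      | inl y => simp at huv
  have hAcard : A.card ≤ N := by
    have := Finset.card_le_card_of_injOn
      (f := fun i => if h : ∃ x, Sum.inl x ∈ f i then h.choose else ⟨0, hN⟩)
      (s := A) (t := (Finset.univ : Finset (Fin N))) ?_ ?_
    · simpa using this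
    · intro a _; exact Finset.mem_univ _
    · intro i hi j hj hij
      simp only [A, Finset.mem_coe, Finset.mem_filter, Finset.mem_univ, true_and] at hi hj
      simp only [dif_pos hi, dif_pos hj] at hij
      by_contra hne'
      exact Set.disjoint_left.mp (hdisj hne') hi.choose_spec (hij ▸ hj.choose_spec)
  have hBcard : B.card ≤ N' := by
    have := Finset.card_le_card_of_injOn
      (f := fun i => if h : ∃ x, Sum.inr x ∈ f i then h.choose else ⟨0, hN'⟩)
      (s := B) (t := (Finset.univ : Finset (Fin N'))) ?_ ?_
    · simpa using this
    · intro a _; exact Finset.mem_univ _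
    · intro i hi j hj hij
      simp only [B, Finset.mem_coe, Finset.mem_filter, Finset.mem_univ, true_and] at hi hj
      simp only [dif_pos hi, dif_pos hj] at hij
      by_contra hne'
      exact Set.disjoint_left.mp (hdisj hne') hi.choose_spec (hij ▸ hj.choose_spec)
  have h1 : A.card + Aᶜ.card = min N N' + 2 := by
    rw [Finset.card_add_card_compl]; simp
  have h2 : B.card + Bᶜ.card = min N N' + 2 := by
    rw [Finset.card_add_card_compl]; simp
  omega

/-- The largest complete graph minor of `K_{N,N'}` is `K_{min(N,N')+1}`:
`K_{min(N,N')+1}` is a minor of `K_{N,N'}` and `K_{min(N,N')+2}` is not. -/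
theorem largest_clique_minor_completeBipartite (N N' : ℕ) (hN : 1 ≤ N) (hN' : 1 ≤ N') :
    SimpleGraph.IsMinorOf (⊤ : SimpleGraph (Fin (min N N' + 1)))
        (completeBipartiteGraph (Fin N) (Fin N')) ∧
      ¬ SimpleGraph.IsMinorOf (⊤ : SimpleGraph (Fin (min N N' + 2)))
          (completeBipartiteGraph (Fin N) (Fin N')) :=
  ⟨completeBipartite_top_minor N N' hN hN', completeBipartite_no_bigger_minor N N' hN hN'⟩
end
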